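/- Let L, M, N ⊆ [m] with M a proper subset of [m] and with L, M, N not all empty, and let C = C(Δ_L, Δ_M^c, Δ_N). Then C is a binary linear code of length (2^m − 2^{|M|})·2^{|L|+|N|}, dimension m + |L| + |N|, and minimum distance (2^m − 2^{|M|})·2^{|L|+|N|−1}; its weight enumerator equals 1 + (2^{m+|L|+|N|} − 2^{m−|M|})·X^{(2^m − 2^{|M|})·2^{|L|+|N|−1}} + (2^{m−|M|} − 1)·X^{2^{m+|L|+|N|−1}}; and C is a Griesmer code, i.e., Σ_{i=0}^{k−1} ⌈d/2^i⌉ = n for these n, k, d. -/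

import Mathlib

open Finset Polynomial
open scoped Classical

/-- `V m` is the vector space `F₂^m`. -/
abbrev V (m : ℕ) := Fin m → ZMod 2

/-- Dot product `x·y = Σ_i x_i y_i` in `F₂`. -/
def dot {m : ℕ} (x y : V m) : ZMod 2 := ∑ i, x i * y i

/-- `Supp v = {i : v i ≠ 0}`. -/
def supp {m : ℕ} (v : V m) : Finset (Fin m) := Finset.univ.filter fun i => v i ≠ 0

/-- The simplicial complex `Δ_L = {v : Supp v ⊆ L}` generated by `L`. -/
def Δ {m : ℕ} (L : Finset (Fin m)) : Finset (V m) := Finset.univ.filter fun v => supp v ⊆ L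

/-- Hamming weight of a vector. -/
def wtv {ι : Type} [Fintype ι] (c : ι → ZMod 2) : ℕ :=
  (Finset.univ.filter fun i => c i ≠ 0).card

/-- The linear functional `x ↦ x·y`. -/
noncomputable def dotL {m : ℕ} (y : V m) : V m →ₗ[ZMod 2] ZMod 2 :=
  ∑ i, LinearMap.smulRight (LinearMap.proj i) (y i)

/-- The linear map `(α,β,γ) ↦ ((d₁,d₂,d₃) ↦ α·d₁ + (β+γ)·d₂ + β·d₃)` whose range is the
binary code `C(D₁,D₂,D₃)`. -/
noncomputable def codeMap {m : ℕ} (D₁ D₂ D₃ : Finset (V m)) :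
    (V m × V m × V m) →ₗ[ZMod 2]
      (({x // x ∈ D₁} × {x // x ∈ D₂} × {x // x ∈ D₃}) → ZMod 2) :=
  LinearMap.pi fun d =>
    (dotL d.1.1).comp (LinearMap.fst (ZMod 2) (V m) (V m × V m))
    + (dotL d.2.1.1).comp
        (((LinearMap.fst (ZMod 2) (V m) (V m)).comp (LinearMap.snd (ZMod 2) (V m) (V m × V m)))
          + ((LinearMap.snd (ZMod 2) (V m) (V m)).comp (LinearMap.snd (ZMod 2) (V m) (V m × V m))))
    + (dotL d.2.2.1).comp
        ((LinearMap.fst (ZMod 2) (V m) (V m)).comp (LinearMap.snd (ZMod 2) (V m) (V m × V m)))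

lemma codeMap_apply {m : ℕ} (D₁ D₂ D₃ : Finset (V m)) (α β γ : V m)
    (d : {x // x ∈ D₁} × {x // x ∈ D₂} × {x // x ∈ D₃}) :
    codeMap D₁ D₂ D₃ (α, β, γ) d = dot α d.1.1 + dot (β + γ) d.2.1.1 + dot β d.2.2.1 := by
  simp [codeMap, dotL, dot, LinearMap.smulRight, mul_comm]

-- sign character
def sgn : ZMod 2 → ℤ := fun v => if v = 0 then 1 else -1

lemma sgn_add (a b : ZMod 2) : sgn (a + b) = sgn a * sgn b := by revert a b; decide

lemma mem_Δ {m : ℕ} {L : Finset (Fin m)} {v : V m} : v ∈ Δ L ↔ ∀ i ∉ L, v i = 0 := by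
  simp only [Δ, supp, mem_filter, mem_univ, true_and, Finset.subset_iff, mem_filter, mem_univ,
    true_and]
  constructor
  · intro h i hi
    by_contra hv
    exact hi (h hv)
  · intro h i hv
    by_contra hi
    exact hv (h i hi)

lemma zero_mem_Δ {m : ℕ} (L : Finset (Fin m)) : (0 : V m) ∈ Δ L := by
  simp [mem_Δ]

lemma single_mem_Δ {m : ℕ} {L : Finset (Fin m)} {i : Fin m} (hi : i ∈ L) :
    (Pi.single i 1 : V m) ∈ Δ L := by
  rw [mem_Δ]
  intro j hj
  exact Pi.single_eq_of_ne (fun h : j = i => hj (h ▸ hi)) 1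

lemma dot_single {m : ℕ} (y : V m) (i : Fin m) : dot y (Pi.single i 1) = y i := by
  simp [dot, Pi.single_apply, mul_ite]

lemma dot_zero' {m : ℕ} (y : V m) : dot y 0 = 0 := by simp [dot]

lemma dot_zero_left {m : ℕ} (d : V m) : dot 0 d = 0 := by simp [dot]

lemma dot_add_right {m : ℕ} (y a b : V m) : dot y (a + b) = dot y a + dot y b := by
  simp [dot, mul_add, Finset.sum_add_distrib]

lemma dot_eq_zero_of {m : ℕ} {L : Finset (Fin m)} {y d : V m}
    (hy : ∀ i ∈ L, y i = 0) (hd : d ∈ Δ L) : dot y d = 0 := by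
  rw [mem_Δ] at hd
  apply Finset.sum_eq_zero
  intro i _
  by_cases h : i ∈ L
  · rw [hy i h, zero_mul]
  · rw [hd i h, mul_zero]

lemma card_Δ {m : ℕ} (L : Finset (Fin m)) : (Δ L).card = 2 ^ L.card := by
  have h : Δ L = Fintype.piFinset (fun i => if i ∈ L then (univ : Finset (ZMod 2)) else {0}) := by
    ext v
    simp only [mem_Δ, Fintype.mem_piFinset]
    constructor
    · intro h i
      by_cases hi : i ∈ L <;> simp [hi, h]
    · intro h i hi
      have := h i
      simpa [hi] using this
  rw [h, Fintype.card_piFinset]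
  have : ∀ i : Fin m, ((if i ∈ L then (univ : Finset (ZMod 2)) else {0}).card)
      = if i ∈ L then 2 else 1 := by
    intro i; by_cases hi : i ∈ L <;> simp [hi]
  simp_rw [this]
  rw [Finset.prod_ite_mem, Finset.univ_inter, Finset.prod_const]

lemma sum_sgn_Δ {m : ℕ} (L : Finset (Fin m)) (y : V m) :
    ∑ d ∈ Δ L, sgn (dot y d) = if ∀ i ∈ L, y i = 0 then (2 : ℤ) ^ L.card else 0 := by
  split_ifs with h
  · calc ∑ d ∈ Δ L, sgn (dot y d) = ∑ _d ∈ Δ L, (1 : ℤ) := by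
          apply Finset.sum_congr rfl
          intro d hd
          rw [dot_eq_zero_of h hd]; rfl
      _ = ((Δ L).card : ℤ) := by simp
      _ = 2 ^ L.card := by rw [card_Δ]; push_cast; ring
  · push_neg at h
    obtain ⟨i, hiL, hyi⟩ := h
    have hyi1 : y i = 1 := by
      have : y i = 0 ∨ y i = 1 := by revert hyi; generalize y i = a; revert a; decide
      tauto
    apply Finset.sum_involution (g := fun d _ => d + Pi.single i 1)
    · intro d _
      rw [dot_add_right, dot_single, sgn_add, hyi1]
      have h1 : sgn 1 = -1 := rfl
      rw [h1]; ring
    · intro d _ _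
      intro hcon
      have := congrFun hcon i
      simp at this
    · intro d _
      funext j
      by_cases hji : j = i
      · subst hji
        have h2 : (1 : ZMod 2) + 1 = 0 := rfl
        simp [add_assoc, h2]
      · simp [Pi.single_eq_of_ne hji]
    · intro d hd
      rw [mem_Δ] at hd ⊢
      intro j hj
      have hji : j ≠ i := fun h => hj (h ▸ hiL)
      simp [hd j hj, Pi.single_eq_of_ne hji]

lemma Δ_univ_eq {m : ℕ} : Δ (univ : Finset (Fin m)) = univ := by
  ext v; simp [mem_Δ]

lemma sum_sgn_univ {m : ℕ} (y : V m) :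
    ∑ d : V m, sgn (dot y d) = if y = 0 then (2 : ℤ) ^ m else 0 := by
  have := sum_sgn_Δ (univ : Finset (Fin m)) y
  rw [Δ_univ_eq] at this
  rw [this]
  congr 1
  · simp [funext_iff]
  · simp

lemma sum_sgn_compl {m : ℕ} (M : Finset (Fin m)) (y : V m) :
    ∑ d ∈ (Δ M)ᶜ, sgn (dot y d)
      = (if y = 0 then (2 : ℤ) ^ m else 0) - (if ∀ i ∈ M, y i = 0 then (2 : ℤ) ^ M.card else 0) := by
  have h := Finset.sum_add_sum_compl (Δ M) (fun d => sgn (dot y d))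
  rw [sum_sgn_univ] at h
  rw [← sum_sgn_Δ M y]
  linarith

lemma sgn_sum_eq {ι : Type} [Fintype ι] (c : ι → ZMod 2) :
    ∑ i, sgn (c i) = (Fintype.card ι : ℤ) - 2 * wtv c := by
  have h1 : ∀ i, sgn (c i) = 1 - (if c i ≠ 0 then (2 : ℤ) else 0) := by
    intro i
    by_cases h : c i = 0 <;> simp [sgn, h]
  rw [Finset.sum_congr rfl (fun i _ => h1 i), Finset.sum_sub_distrib, Finset.sum_const,
    Finset.sum_ite, Finset.sum_const, Finset.sum_const]
  rw [wtv]
  push_cast [nsmul_eq_mul]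
  rw [Finset.card_univ]
  ring

lemma weight_formula {m : ℕ} (D₁ D₂ D₃ : Finset (V m)) (α β γ : V m) :
    2 * (wtv (codeMap D₁ D₂ D₃ (α, β, γ)) : ℤ)
      = (D₁.card * D₂.card * D₃.card : ℤ)
        - (∑ d ∈ D₁, sgn (dot α d))
          * ((∑ d ∈ D₂, sgn (dot (β + γ) d)) * (∑ d ∈ D₃, sgn (dot β d))) := by
  have h := sgn_sum_eq (codeMap D₁ D₂ D₃ (α, β, γ))
  have hcard : (Fintype.card ({x // x ∈ D₁} × {x // x ∈ D₂} × {x // x ∈ D₃}) : ℤ)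
      = (D₁.card * D₂.card * D₃.card : ℤ) := by
    simp [Fintype.card_prod, Fintype.card_coe]
    push_cast
    ring
  have hsum : ∑ d, sgn (codeMap D₁ D₂ D₃ (α, β, γ) d)
      = (∑ d ∈ D₁, sgn (dot α d))
          * ((∑ d ∈ D₂, sgn (dot (β + γ) d)) * (∑ d ∈ D₃, sgn (dot β d))) := by
    simp_rw [codeMap_apply, sgn_add]
    rw [Fintype.sum_prod_type]
    simp_rw [Fintype.sum_prod_type]
    simp_rw [mul_assoc, ← Finset.mul_sum]
    rw [← Finset.sum_mul]
    rw [Finset.sum_coe_sort D₁ (fun d => sgn (dot α d))]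
    congr 1
    rw [← Finset.sum_mul, Finset.sum_coe_sort D₂ (fun d => sgn (dot (β + γ) d))]
    congr 1
    exact Finset.sum_coe_sort D₃ (fun d => sgn (dot β d))
  rw [hsum, hcard] at h
  linarith

lemma zmod2_add_self (a : ZMod 2) : a + a = 0 := by revert a; decide

lemma vadd_self {m : ℕ} (v : V m) : v + v = 0 := by
  funext i; exact zmod2_add_self (v i)

lemma eq_of_add_eq_zero' {m : ℕ} {a b : V m} (h : a + b = 0) : b = a := by
  funext i
  have hi := congrFun h i
  have : ∀ x y : ZMod 2, x + y = 0 → y = x := by decide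
  exact this _ _ hi

lemma single_not_mem_Δ {m : ℕ} {M : Finset (Fin m)} {i : Fin m} (hi : i ∉ M) :
    (Pi.single i 1 : V m) ∉ Δ M := by
  rw [mem_Δ]
  push_neg
  exact ⟨i, hi, by simp⟩

lemma ker_iff {m : ℕ} (L M N : Finset (Fin m)) (hM : M ⊂ univ) (α β γ : V m) :
    codeMap (Δ L) (Δ M)ᶜ (Δ N) (α, β, γ) = 0
      ↔ ((∀ i ∈ L, α i = 0) ∧ γ = β ∧ (∀ i ∈ N, β i = 0)) := by
  obtain ⟨j, _, hjM⟩ := Finset.exists_of_ssubset hM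
  have hj2 : (Pi.single j 1 : V m) ∈ (Δ M)ᶜ := Finset.mem_compl.2 (single_not_mem_Δ hjM)
  constructor
  · intro h
    have hco : ∀ (d₁ : {x // x ∈ Δ L}) (d₂ : {x // x ∈ (Δ M)ᶜ}) (d₃ : {x // x ∈ Δ N}),
        dot α d₁.1 + dot (β + γ) d₂.1 + dot β d₃.1 = 0 := by
      intro d₁ d₂ d₃
      rw [← codeMap_apply (Δ L) (Δ M)ᶜ (Δ N) α β γ (d₁, d₂, d₃), h]
      rfl
    have h0L : (⟨0, zero_mem_Δ L⟩ : {x // x ∈ Δ L}) = ⟨0, zero_mem_Δ L⟩ := rfl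
    -- middle dots vanish
    have hmid : ∀ d₂ : {x // x ∈ (Δ M)ᶜ}, dot (β + γ) d₂.1 = 0 := by
      intro d₂
      have := hco ⟨0, zero_mem_Δ L⟩ d₂ ⟨0, zero_mem_Δ N⟩
      simpa [dot_zero'] using this
    -- y := β + γ is zero
    have hy : β + γ = 0 := by
      funext i
      by_cases hiM : i ∈ M
      · have hij : i ≠ j := fun h => hjM (h ▸ hiM)
        have hd : (Pi.single i 1 + Pi.single j 1 : V m) ∉ Δ M := by
          rw [mem_Δ]
          push_neg
          refine ⟨j, hjM, ?_⟩
          simp [Pi.single_eq_of_ne (Ne.symm hij)]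
        have h1 := hmid ⟨_, Finset.mem_compl.2 hd⟩
        rw [dot_add_right, dot_single, dot_single] at h1
        have h2 := hmid ⟨_, hj2⟩
        rw [dot_single] at h2
        rw [Pi.zero_apply]
        rw [h2, add_zero] at h1
        exact h1
      · have h1 := hmid ⟨_, Finset.mem_compl.2 (single_not_mem_Δ hiM)⟩
        rw [dot_single] at h1
        rw [Pi.zero_apply, h1]
    have hco2 : ∀ (d₁ : {x // x ∈ Δ L}) (d₃ : {x // x ∈ Δ N}),
        dot α d₁.1 + dot β d₃.1 = 0 := by
      intro d₁ d₃
      have := hco d₁ ⟨_, hj2⟩ d₃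
      rwa [hy, dot_zero_left, add_zero] at this
    refine ⟨?_, eq_of_add_eq_zero' hy, ?_⟩
    · intro i hi
      have := hco2 ⟨_, single_mem_Δ hi⟩ ⟨0, zero_mem_Δ N⟩
      rwa [dot_single, dot_zero', add_zero] at this
    · intro i hi
      have := hco2 ⟨0, zero_mem_Δ L⟩ ⟨_, single_mem_Δ hi⟩
      rwa [dot_single, dot_zero', zero_add] at this
  · rintro ⟨hL, rfl, hN⟩
    funext d
    rw [codeMap_apply, vadd_self, dot_zero_left, dot_eq_zero_of hL d.1.2,
      dot_eq_zero_of hN d.2.2.2]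
    rfl

lemma filter_zOn_eq {m : ℕ} (L : Finset (Fin m)) :
    (univ.filter fun v : V m => ∀ i ∈ L, v i = 0) = Δ Lᶜ := by
  ext v
  simp [mem_Δ]

lemma card_Δ_compl {m : ℕ} (L : Finset (Fin m)) : (Δ Lᶜ).card = 2 ^ (m - L.card) := by
  rw [card_Δ, Finset.card_compl, Fintype.card_fin]

lemma card_V {m : ℕ} : Fintype.card (V m) = 2 ^ m := by
  simp [Fintype.card_fun]

lemma card_ker_filter {m : ℕ} (L N : Finset (Fin m)) :
    (univ.filter fun x : V m × V m × V m =>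
        (∀ i ∈ L, x.1 i = 0) ∧ x.2.2 = x.2.1 ∧ (∀ i ∈ N, x.2.1 i = 0)).card
      = 2 ^ (m - L.card) * 2 ^ (m - N.card) := by
  have h : (univ.filter fun x : V m × V m × V m =>
        (∀ i ∈ L, x.1 i = 0) ∧ x.2.2 = x.2.1 ∧ (∀ i ∈ N, x.2.1 i = 0))
      = (Δ Lᶜ) ×ˢ ((Δ Nᶜ).image fun b => (b, b)) := by
    ext ⟨a, b, c⟩
    simp only [mem_filter, mem_univ, true_and, Finset.mem_product, Finset.mem_image, mem_Δ,
      Finset.mem_compl, not_not, Prod.mk.injEq]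
    constructor
    · rintro ⟨h1, h2, h3⟩
      exact ⟨h1, b, h3, rfl, h2.symm⟩
    · rintro ⟨h1, β, hβ, rfl, rfl⟩
      exact ⟨h1, rfl, hβ⟩
  rw [h, Finset.card_product, Finset.card_image_of_injective _ (fun a b hab => (Prod.mk.injEq _ _ _ _ ▸ hab : _ ∧ _).1),
    card_Δ_compl, card_Δ_compl]

lemma card_w2_filter {m : ℕ} (L M N : Finset (Fin m)) :
    (univ.filter fun x : V m × V m × V m =>
        (∀ i ∈ L, x.1 i = 0) ∧ (∀ i ∈ N, x.2.1 i = 0) ∧ x.2.1 + x.2.2 ≠ 0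
          ∧ (∀ i ∈ M, (x.2.1 + x.2.2) i = 0)).card
      = 2 ^ (m - L.card) * (2 ^ (m - N.card) * (2 ^ (m - M.card) - 1)) := by
  have h : (univ.filter fun x : V m × V m × V m =>
        (∀ i ∈ L, x.1 i = 0) ∧ (∀ i ∈ N, x.2.1 i = 0) ∧ x.2.1 + x.2.2 ≠ 0
          ∧ (∀ i ∈ M, (x.2.1 + x.2.2) i = 0))
      = (Δ Lᶜ) ×ˢ (((Δ Nᶜ) ×ˢ ((Δ Mᶜ).erase 0)).image fun p => (p.1, p.1 + p.2)) := by
    ext ⟨a, b, c⟩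
    simp only [mem_filter, mem_univ, true_and, Finset.mem_product, Finset.mem_image,
      Finset.mem_erase, mem_Δ, Finset.mem_compl, not_not, Prod.mk.injEq, Prod.exists]
    constructor
    · rintro ⟨h1, h2, h3, h4⟩
      refine ⟨h1, b, b + c, ⟨h2, h3, h4⟩, rfl, ?_⟩
      rw [← add_assoc, vadd_self, zero_add]
    · rintro ⟨h1, β, z, ⟨hβ, hz0, hzM⟩, rfl, rfl⟩
      refine ⟨h1, hβ, ?_, ?_⟩
      · rwa [← add_assoc, vadd_self, zero_add]
      · rwa [← add_assoc, vadd_self, zero_add]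
  rw [h, Finset.card_product, Finset.card_image_of_injective, Finset.card_product,
    Finset.card_erase_of_mem (zero_mem_Δ Mᶜ), card_Δ_compl, card_Δ_compl, card_Δ_compl]
  rintro ⟨a, b⟩ ⟨c, d⟩ hab
  simp only [Prod.mk.injEq] at hab
  obtain ⟨h1, h2⟩ := hab
  subst h1
  exact Prod.mk.injEq .. ▸ ⟨rfl, add_left_cancel h2⟩

lemma card_compl_ΔM {m : ℕ} (M : Finset (Fin m)) : ((Δ M)ᶜ).card = 2 ^ m - 2 ^ M.card := by
  rw [Finset.card_compl, card_Δ, card_V]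

lemma card_cast {m : ℕ} (M : Finset (Fin m)) (hle : M.card ≤ m) :
    (((Δ M)ᶜ.card : ℤ)) = 2 ^ m - 2 ^ M.card := by
  rw [card_compl_ΔM, Nat.cast_sub (Nat.pow_le_pow_right (by norm_num) hle)]
  push_cast
  ring

/-- Case: the character-sum product vanishes; weight is `n/2`. -/
lemma wt_eq_half {m : ℕ} (L M N : Finset (Fin m)) (hle : M.card ≤ m) (α β γ : V m)
    (hS : (∑ d ∈ Δ L, sgn (dot α d))
        * ((∑ d ∈ (Δ M)ᶜ, sgn (dot (β + γ) d)) * (∑ d ∈ Δ N, sgn (dot β d))) = 0) :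
    2 * (wtv (codeMap (Δ L) (Δ M)ᶜ (Δ N) (α, β, γ)) : ℤ)
      = ((2 : ℤ) ^ m - 2 ^ M.card) * 2 ^ (L.card + N.card) := by
  rw [weight_formula, hS, sub_zero, card_Δ, card_Δ, card_cast M hle]
  push_cast
  rw [pow_add]
  ring

/-- Case: `α` vanishes on `L`, `β` on `N`, `y = β+γ ≠ 0` but vanishes on `M`:
weight is `2^(m+|L|+|N|-1)`. -/
lemma wt_eq_big {m : ℕ} (hm : 1 ≤ m) (L M N : Finset (Fin m)) (hle : M.card ≤ m) (α β γ : V m)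
    (h1 : ∀ i ∈ L, α i = 0) (h3 : ∀ i ∈ N, β i = 0) (hy : β + γ ≠ 0)
    (hyM : ∀ i ∈ M, (β + γ) i = 0) :
    (wtv (codeMap (Δ L) (Δ M)ᶜ (Δ N) (α, β, γ)) : ℤ) = 2 ^ (m + L.card + N.card - 1) := by
  have h2 : 2 * (wtv (codeMap (Δ L) (Δ M)ᶜ (Δ N) (α, β, γ)) : ℤ) = 2 ^ (m + L.card + N.card) := by
    rw [weight_formula, card_Δ, card_Δ, card_cast M hle, sum_sgn_Δ, sum_sgn_Δ, sum_sgn_compl,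
      if_pos h1, if_pos h3, if_neg hy, if_pos hyM]
    push_cast
    rw [pow_add, pow_add]
    ring
  have hexp : m + L.card + N.card = (m + L.card + N.card - 1) + 1 := by omega
  rw [hexp, pow_succ] at h2
  linarith

lemma S_zero_of {m : ℕ} (L M N : Finset (Fin m)) (α β γ : V m)
    (h0 : ¬((∀ i ∈ L, α i = 0) ∧ γ = β ∧ (∀ i ∈ N, β i = 0)))
    (h2 : ¬((∀ i ∈ L, α i = 0) ∧ (∀ i ∈ N, β i = 0) ∧ β + γ ≠ 0
        ∧ (∀ i ∈ M, (β + γ) i = 0))) :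
    (∑ d ∈ Δ L, sgn (dot α d))
        * ((∑ d ∈ (Δ M)ᶜ, sgn (dot (β + γ) d)) * (∑ d ∈ Δ N, sgn (dot β d))) = 0 := by
  by_cases hA : ∀ i ∈ L, α i = 0
  · by_cases hB : ∀ i ∈ N, β i = 0
    · by_cases hy : β + γ = 0
      · exact absurd ⟨hA, eq_of_add_eq_zero' hy, hB⟩ h0
      · have hM : ¬(∀ i ∈ M, (β + γ) i = 0) := fun hMM => h2 ⟨hA, hB, hy, hMM⟩
        rw [sum_sgn_compl, if_neg hy, if_neg hM, sub_zero]
        ring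
    · rw [sum_sgn_Δ _ β, if_neg hB]
      ring
  · rw [sum_sgn_Δ _ α, if_neg hA]
    ring

lemma tadd_self {m : ℕ} (x : V m × V m × V m) : x + x = 0 := by
  obtain ⟨a, b, c⟩ := x
  simp [Prod.ext_iff, vadd_self]

lemma cadd_self {m : ℕ} {D₁ D₂ D₃ : Finset (V m)}
    (c : ({x // x ∈ D₁} × {x // x ∈ D₂} × {x // x ∈ D₃}) → ZMod 2) : c + c = 0 := by
  funext d
  exact zmod2_add_self (c d)

lemma filter_fiber_card {m : ℕ} (D₁ D₂ D₃ : Finset (V m)) (x₀ : V m × V m × V m) :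
    (univ.filter fun x => codeMap D₁ D₂ D₃ x = codeMap D₁ D₂ D₃ x₀).card
      = (univ.filter fun x => codeMap D₁ D₂ D₃ x = 0).card := by
  apply Finset.card_bij' (i := fun x _ => x + x₀) (j := fun x _ => x + x₀)
  · intro a ha
    simp only [mem_filter, mem_univ, true_and] at ha ⊢
    rw [map_add, ha, cadd_self]
  · intro a ha
    simp only [mem_filter, mem_univ, true_and] at ha ⊢
    rw [map_add, ha, zero_add]
  · intro a _
    rw [add_assoc, tadd_self, add_zero]
  · intro a _
    rw [add_assoc, tadd_self, add_zero]

lemma sum_over_code {m : ℕ} (D₁ D₂ D₃ : Finset (V m)) {A : Type*} [AddCommMonoid A]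
    (g : (({x // x ∈ D₁} × {x // x ∈ D₂} × {x // x ∈ D₃}) → ZMod 2) → A) :
    ∑ x : V m × V m × V m, g (codeMap D₁ D₂ D₃ x)
      = ∑ c ∈ univ.filter (fun c => c ∈ LinearMap.range (codeMap D₁ D₂ D₃)),
          (univ.filter fun x => codeMap D₁ D₂ D₃ x = 0).card • g c := by
  rw [Finset.sum_comp]
  have himg : univ.image (codeMap D₁ D₂ D₃)
      = univ.filter (fun c => c ∈ LinearMap.range (codeMap D₁ D₂ D₃)) := by
    ext c
    simp [LinearMap.mem_range]
  rw [himg]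
  apply Finset.sum_congr rfl
  intro c hc
  rw [mem_filter] at hc
  obtain ⟨x₀, hx₀⟩ := hc.2
  rw [← hx₀]
  rw [filter_fiber_card]

lemma card_ker' {m : ℕ} (L M N : Finset (Fin m)) (hM : M ⊂ univ) :
    (univ.filter fun x : V m × V m × V m => codeMap (Δ L) (Δ M)ᶜ (Δ N) x = 0).card
      = 2 ^ (m - L.card) * 2 ^ (m - N.card) := by
  rw [← card_ker_filter L N]
  apply Finset.card_bij (fun x _ => x)
  · intro x hx
    rw [mem_filter] at hx ⊢
    exact ⟨hx.1, (ker_iff L M N hM x.1 x.2.1 x.2.2).1 (by simpa using hx.2)⟩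
  · intro a b _ _ h; exact h
  · intro b hb
    rw [mem_filter] at hb
    refine ⟨b, ?_, rfl⟩
    rw [mem_filter]
    exact ⟨hb.1, by simpa using (ker_iff L M N hM b.1 b.2.1 b.2.2).2 hb.2⟩

lemma finrank_range_eq {m : ℕ} (L M N : Finset (Fin m)) (hM : M ⊂ univ)
    (hl : L.card ≤ m) (hn : N.card ≤ m) :
    Module.finrank (ZMod 2) ↥(LinearMap.range (codeMap (Δ L) (Δ M)ᶜ (Δ N)))
      = m + L.card + N.card := by
  set f := codeMap (Δ L) (Δ M)ᶜ (Δ N) with hf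
  have hker_card : Fintype.card ↥(LinearMap.ker f) = 2 ^ ((m - L.card) + (m - N.card)) := by
    rw [Fintype.card_subtype]
    rw [pow_add, ← card_ker' L M N hM]
    apply Finset.card_nbij id
    · intro x hx
      rw [Finset.mem_coe, mem_filter] at hx ⊢
      exact ⟨hx.1, LinearMap.mem_ker.1 hx.2⟩
    · intro a _ b _ h; exact h
    · intro b hb
      rw [Finset.coe_filter] at hb ⊢
      exact ⟨b, ⟨hb.1, LinearMap.mem_ker.2 hb.2⟩, rfl⟩
  have hq : Fintype.card (ZMod 2) = 2 := by simp
  have hker_rank : Module.finrank (ZMod 2) ↥(LinearMap.ker f) = (m - L.card) + (m - N.card) := by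
    have h := Module.card_eq_pow_finrank (K := ZMod 2) (V := ↥(LinearMap.ker f))
    rw [hker_card, hq] at h
    exact (Nat.pow_right_injective (le_refl 2) h.symm)
  have hrn := LinearMap.finrank_range_add_finrank_ker f
  have hdom : Module.finrank (ZMod 2) (V m × V m × V m) = 3 * m := by
    have h1 : Module.finrank (ZMod 2) (V m) = m := by
      rw [Module.finrank_pi, Fintype.card_fin]
    rw [Module.finrank_prod, Module.finrank_prod, h1]
    ring
  rw [hdom, hker_rank] at hrn
  omega

lemma geom_int (n : ℕ) : ∑ i ∈ Finset.range n, (2 : ℤ) ^ i = 2 ^ n - 1 := by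
  induction n with
  | zero => simp
  | succ k ih => rw [Finset.sum_range_succ, ih]; ring

lemma griesmer_sum (a' t : ℕ) (ht : 1 ≤ t) :
    ∑ i ∈ Finset.range (a' + 1 + t), ⌈((2 : ℚ) ^ a' * (2 ^ t - 1)) / 2 ^ i⌉
      = 2 ^ (a' + 1) * ((2 : ℤ) ^ t - 1) := by
  rw [Finset.sum_range_add]
  have h1 : ∀ i ∈ Finset.range (a' + 1),
      ⌈((2 : ℚ) ^ a' * (2 ^ t - 1)) / 2 ^ i⌉ = 2 ^ (a' - i) * ((2 : ℤ) ^ t - 1) := by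
    intro i hi
    rw [Finset.mem_range] at hi
    have hii : i ≤ a' := by omega
    have hsplit : (2 : ℚ) ^ a' = 2 ^ i * 2 ^ (a' - i) := by
      rw [← pow_add]; congr 1; omega
    have hq : ((2 : ℚ) ^ a' * (2 ^ t - 1)) / 2 ^ i = ((2 ^ (a' - i) * ((2 : ℤ) ^ t - 1) : ℤ) : ℚ) := by
      push_cast
      rw [hsplit]
      field_simp
    rw [hq, Int.ceil_intCast]
  rw [Finset.sum_congr rfl h1]
  have h2 : ∀ j ∈ Finset.range t,
      ⌈((2 : ℚ) ^ a' * (2 ^ t - 1)) / 2 ^ (a' + 1 + j)⌉ = 2 ^ (t - 1 - j) := by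
    intro j hj
    rw [Finset.mem_range] at hj
    have hq : ((2 : ℚ) ^ a' * (2 ^ t - 1)) / 2 ^ (a' + 1 + j) = (2 ^ t - 1) / 2 ^ (j + 1) := by
      have : (2 : ℚ) ^ (a' + 1 + j) = 2 ^ a' * 2 ^ (j + 1) := by
        rw [← pow_add]; congr 1; omega
      rw [this]
      have h2a : (2 : ℚ) ^ a' ≠ 0 := by positivity
      field_simp
    rw [hq, Int.ceil_eq_iff]
    have hpos : (0 : ℚ) < 2 ^ (j + 1) := by positivity
    have hsplit : (2 : ℚ) ^ (t - 1 - j) * 2 ^ (j + 1) = 2 ^ t := by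
      rw [← pow_add]; congr 1; omega
    constructor
    · rw [lt_div_iff₀ hpos]
      push_cast
      rw [sub_mul, hsplit]
      have : (1 : ℚ) * 2 ^ (j + 1) = 2 ^ (j + 1) := one_mul _
      rw [this]
      have hj1 : (1 : ℚ) < 2 ^ (j + 1) := by
        have : (2 : ℚ) ^ 0 < 2 ^ (j + 1) := by
          apply pow_lt_pow_right₀ (by norm_num) (by omega)
        simpa using this
      linarith
    · rw [div_le_iff₀ hpos]
      push_cast
      rw [hsplit]
      linarith
  rw [Finset.sum_congr rfl h2]
  rw [← Finset.sum_mul]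
  have h4 : ∑ i ∈ Finset.range (a' + 1), (2 : ℤ) ^ (a' - i) = 2 ^ (a' + 1) - 1 := by
    have hr := Finset.sum_range_reflect (fun j => (2 : ℤ) ^ j) (a' + 1)
    simp only [Nat.add_sub_cancel] at hr
    rw [hr, geom_int]
  rw [h4]
  have h3 : ∑ j ∈ Finset.range t, (2 : ℤ) ^ (t - 1 - j) = 2 ^ t - 1 := by
    rw [Finset.sum_range_reflect (fun j => (2 : ℤ) ^ j) t]
    · exact geom_int t
  rw [h3]
  ring

lemma wtv_zero {ι : Type} [Fintype ι] : wtv (0 : ι → ZMod 2) = 0 := by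
  simp [wtv]

lemma pow_arith (a' t mm e : ℕ) (he : e + mm = a' + 1) :
    ((2 : ℤ) ^ (mm + t) - 2 ^ mm) * 2 ^ e = 2 * (2 ^ a' * (2 ^ t - 1)) := by
  have key : (2 : ℤ) ^ e * 2 ^ mm = 2 ^ a' * 2 := by
    rw [← pow_add, he, pow_succ]
  linear_combination ((2 : ℤ) ^ t - 1) * key


/-- Theorem 4.1(3): the code `C((Δ L), (Δ M)ᶜ, (Δ N))` is a two-weight
binary `[(2^m − 2^{|M|})·2^{|L|}+|N|}, m+|L|+|N|]` Griesmer code with the stated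
weight distribution. -/
theorem stmt7 (m : ℕ) (hm : 1 ≤ m) (L M N : Finset (Fin m))
    (hP : M ⊂ Finset.univ) (hne : L ≠ ∅ ∨ M ≠ ∅ ∨ N ≠ ∅) :
    (Fintype.card ({x // x ∈ (Δ L)} × {x // x ∈ (Δ M)ᶜ} × {x // x ∈ (Δ N)}) = (2 ^ m - 2 ^ M.card) * 2 ^ (L.card + N.card)) ∧
    (Module.finrank (ZMod 2) ↥(LinearMap.range (codeMap (Δ L) (Δ M)ᶜ (Δ N))) = m + L.card + N.card) ∧
    IsLeast {w : ℕ | ∃ c ∈ LinearMap.range (codeMap (Δ L) (Δ M)ᶜ (Δ N)), c ≠ 0 ∧ wtv c = w}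
      (((2 ^ m - 2 ^ M.card) * 2 ^ (L.card + N.card)) / 2) ∧
    ((∑ c ∈ Finset.univ.filter (fun c => c ∈ LinearMap.range (codeMap (Δ L) (Δ M)ᶜ (Δ N))),
        (X : ℤ[X]) ^ wtv c)
      = 1 + Polynomial.C ((2 : ℤ) ^ (m + L.card + N.card) - 2 ^ (m - M.card)) * X ^ (((2 ^ m - 2 ^ M.card) * 2 ^ (L.card + N.card)) / 2)
          + Polynomial.C ((2 : ℤ) ^ (m - M.card) - 1) * X ^ (2 ^ (m + L.card + N.card - 1))) ∧
    (∑ i ∈ Finset.range (m + L.card + N.card), ⌈((((2 ^ m - 2 ^ M.card) * 2 ^ (L.card + N.card)) / 2 : ℚ)) / 2 ^ i⌉ = ((2 ^ m - 2 ^ M.card) * 2 ^ (L.card + N.card) : ℤ)) := by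
  classical
  have hl : L.card ≤ m := by simpa using Finset.card_le_univ L
  have hn : N.card ≤ m := by simpa using Finset.card_le_univ N
  have hmlt : M.card < m := by
    have := Finset.card_lt_card hP
    simpa using this
  set l := L.card with hldef
  set nn := N.card with hndef
  set mm := M.card with hmdef
  have ha : 1 ≤ l + nn + mm := by
    rcases hne with h | h | h
    · have := Finset.card_pos.2 (Finset.nonempty_iff_ne_empty.2 h)
      omega
    · have := Finset.card_pos.2 (Finset.nonempty_iff_ne_empty.2 h)
      omega
    · have := Finset.card_pos.2 (Finset.nonempty_iff_ne_empty.2 h)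
      omega
  set f := codeMap (Δ L) (Δ M)ᶜ (Δ N) with hfdef
  have h2le : (2 : ℕ) ^ mm ≤ 2 ^ m := Nat.pow_le_pow_right (by norm_num) (le_of_lt hmlt)
  set n₀ : ℕ := (2 ^ m - 2 ^ mm) * 2 ^ (l + nn) with hn0def
  have hcastn : ((n₀ : ℕ) : ℤ) = ((2 : ℤ) ^ m - 2 ^ mm) * 2 ^ (l + nn) := by
    rw [hn0def, Nat.cast_mul, Nat.cast_sub h2le]
    push_cast
    ring
  have hn0pos : 0 < n₀ := by
    apply Nat.mul_pos
    · have : (2 : ℕ) ^ mm < 2 ^ m := Nat.pow_lt_pow_right (by norm_num) hmlt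
      omega
    · exact Nat.pow_pos (by norm_num)
  set d₀ : ℕ := n₀ / 2 with hd0def
  have hb : n₀ ≤ 2 ^ (m + l + nn) := by
    calc n₀ ≤ 2 ^ m * 2 ^ (l + nn) := Nat.mul_le_mul_right _ (Nat.sub_le _ _)
      _ = 2 ^ (m + l + nn) := by rw [← pow_add]; ring_nf
  have h2w : 2 * 2 ^ (m + l + nn - 1) = 2 ^ (m + l + nn) := by
    rw [← pow_succ']
    congr 1
    omega
  -- weight of an arbitrary element in the "generic" case, as a ℕ equation
  have wt_half_nat : ∀ α β γ : V m,
      ((∑ d ∈ Δ L, sgn (dot α d))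
        * ((∑ d ∈ (Δ M)ᶜ, sgn (dot (β + γ) d)) * (∑ d ∈ Δ N, sgn (dot β d))) = 0) →
      2 * wtv (f (α, β, γ)) = n₀ := by
    intro α β γ hS
    have hZ := wt_eq_half L M N (le_of_lt hmlt) α β γ hS
    have : ((2 : ℤ) ^ m - 2 ^ M.card) * 2 ^ (L.card + N.card) = ((n₀ : ℕ) : ℤ) := by
      rw [hcastn]
    rw [this] at hZ
    exact_mod_cast hZ
  have wt_big_nat : ∀ α β γ : V m, (∀ i ∈ L, α i = 0) → (∀ i ∈ N, β i = 0) →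
      (β + γ ≠ 0) → (∀ i ∈ M, (β + γ) i = 0) →
      wtv (f (α, β, γ)) = 2 ^ (m + l + nn - 1) := by
    intro α β γ a1 a2 a3 a4
    have := wt_eq_big hm L M N (le_of_lt hmlt) α β γ a1 a2 a3 a4
    exact_mod_cast this
  refine ⟨?_, ?_, ⟨?_, ?_⟩, ?_, ?_⟩
  · -- length
    rw [Fintype.card_prod, Fintype.card_prod, Fintype.card_coe, Fintype.card_coe,
      Fintype.card_coe, card_Δ, card_Δ, card_compl_ΔM, ← hldef, ← hndef, ← hmdef, hn0def,
      pow_add]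
    ring
  · -- dimension
    exact finrank_range_eq L M N hP hl hn
  · -- minimum is attained
    have hbuild : ∃ x : V m × V m × V m,
        (∑ d ∈ Δ L, sgn (dot x.1 d))
          * ((∑ d ∈ (Δ M)ᶜ, sgn (dot (x.2.1 + x.2.2) d)) * (∑ d ∈ Δ N, sgn (dot x.2.1 d))) = 0 := by
      rcases hne with h | h | h
      · obtain ⟨i, hi⟩ := Finset.nonempty_iff_ne_empty.2 h
        refine ⟨(Pi.single i 1, 0, 0), ?_⟩
        have hcond : ¬ ∀ j ∈ L, (Pi.single i 1 : V m) j = 0 := by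
          push_neg
          exact ⟨i, hi, by simp⟩
        rw [sum_sgn_Δ, if_neg hcond]
        ring
      · obtain ⟨i, hi⟩ := Finset.nonempty_iff_ne_empty.2 h
        refine ⟨(0, 0, Pi.single i 1), ?_⟩
        have hy0 : ¬ ((0 : V m) + (Pi.single i 1 : V m) = 0) := by
          intro hcon
          have h1 := congrFun hcon i
          simp at h1
        have hyM : ¬ ∀ j ∈ M, ((0 : V m) + (Pi.single i 1 : V m)) j = 0 := by
          push_neg
          exact ⟨i, hi, by simp⟩
        rw [sum_sgn_compl, if_neg hy0, if_neg hyM]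
        ring
      · obtain ⟨i, hi⟩ := Finset.nonempty_iff_ne_empty.2 h
        refine ⟨(0, Pi.single i 1, Pi.single i 1), ?_⟩
        have hcond : ¬ ∀ j ∈ N, (Pi.single i 1 : V m) j = 0 := by
          push_neg
          exact ⟨i, hi, by simp⟩
        rw [sum_sgn_Δ N, if_neg hcond]
        ring
    obtain ⟨x, hS⟩ := hbuild
    obtain ⟨α, β, γ⟩ := x
    have hw := wt_half_nat α β γ hS
    refine ⟨f (α, β, γ), LinearMap.mem_range.2 ⟨(α, β, γ), rfl⟩, ?_, by omega⟩
    intro hcon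
    rw [hcon, wtv_zero] at hw
    omega
  · -- lower bound
    rintro w ⟨c, hcr, hc0, rfl⟩
    obtain ⟨x, rfl⟩ := LinearMap.mem_range.1 hcr
    obtain ⟨α, β, γ⟩ := x
    have h0 : ¬((∀ i ∈ L, α i = 0) ∧ γ = β ∧ (∀ i ∈ N, β i = 0)) := by
      intro hker
      exact hc0 ((ker_iff L M N hP α β γ).2 hker)
    by_cases h2 : (∀ i ∈ L, α i = 0) ∧ (∀ i ∈ N, β i = 0) ∧ β + γ ≠ 0
        ∧ (∀ i ∈ M, (β + γ) i = 0)
    · obtain ⟨a1, a2, a3, a4⟩ := h2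
      have hw := wt_big_nat α β γ a1 a2 a3 a4
      rw [hw]
      omega
    · have hw := wt_half_nat α β γ (S_zero_of L M N α β γ h0 h2)
      omega
  · -- weight enumerator
    set P₀ : V m × V m × V m → Prop := fun x =>
      (∀ i ∈ L, x.1 i = 0) ∧ x.2.2 = x.2.1 ∧ (∀ i ∈ N, x.2.1 i = 0) with hP0def
    set P₂ : V m × V m × V m → Prop := fun x =>
      (∀ i ∈ L, x.1 i = 0) ∧ (∀ i ∈ N, x.2.1 i = 0) ∧ x.2.1 + x.2.2 ≠ 0
        ∧ (∀ i ∈ M, (x.2.1 + x.2.2) i = 0) with hP2def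
    set K : ℕ := 2 ^ (m - l) * 2 ^ (m - nn) with hKdef
    set K₂ : ℕ := 2 ^ (m - l) * (2 ^ (m - nn) * (2 ^ (m - mm) - 1)) with hK2def
    set T : ℕ := Fintype.card (V m × V m × V m) with hTdef
    have hKpos : 0 < K := Nat.mul_pos (Nat.pow_pos (by norm_num))
      (Nat.pow_pos (by norm_num))
    -- pointwise description of X ^ weight
    have hpt : ∀ x : V m × V m × V m, (X : ℤ[X]) ^ (wtv (f x))
        = if P₀ x then 1 else if P₂ x then X ^ (2 ^ (m + l + nn - 1)) else X ^ d₀ := by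
      rintro ⟨α, β, γ⟩
      by_cases h1 : P₀ (α, β, γ)
      · rw [if_pos h1]
        have : f (α, β, γ) = 0 := (ker_iff L M N hP α β γ).2 h1
        rw [this, wtv_zero, pow_zero]
      · rw [if_neg h1]
        by_cases h2 : P₂ (α, β, γ)
        · rw [if_pos h2]
          obtain ⟨a1, a2, a3, a4⟩ := h2
          rw [wt_big_nat α β γ a1 a2 a3 a4]
        · rw [if_neg h2]
          have hw := wt_half_nat α β γ (S_zero_of L M N α β γ h1 h2)
          have : wtv (f (α, β, γ)) = d₀ := by omega
          rw [this]
    -- sum over all triples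
    have hsum_triples : ∑ x : V m × V m × V m, (X : ℤ[X]) ^ (wtv (f x))
        = K • 1 + (K₂ • X ^ (2 ^ (m + l + nn - 1)) + (T - K - K₂) • X ^ d₀) := by
      rw [Finset.sum_congr rfl (fun x _ => hpt x), Finset.sum_ite, Finset.sum_ite]
      have hc0 : (univ.filter P₀).card = K := card_ker_filter L N
      have hfilter2 : ((univ.filter fun x => ¬ P₀ x).filter P₂) = univ.filter P₂ := by
        ext x
        simp only [mem_filter, mem_univ, true_and]
        constructor
        · rintro ⟨_, h⟩; exact h
        · intro h
          refine ⟨?_, h⟩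
          rintro ⟨_, hEq, _⟩
          rw [hP2def] at h
          exact h.2.2.1 (by rw [hEq, vadd_self])
      have hc2 : ((univ.filter fun x => ¬ P₀ x).filter P₂).card = K₂ := by
        rw [hfilter2]
        exact card_w2_filter L M N
      have hcnot : (univ.filter fun x => ¬ P₀ x).card = T - K := by
        have := Finset.card_filter_add_card_filter_not (s := (univ : Finset (V m × V m × V m))) (p := P₀)
        rw [hc0, Finset.card_univ] at this
        omega
      have hc1 : ((univ.filter fun x => ¬ P₀ x).filter fun x => ¬ P₂ x).card = T - K - K₂ := by
        have := Finset.card_filter_add_card_filter_not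
          (s := (univ.filter fun x => ¬ P₀ x)) (p := P₂)
        rw [hc2, hcnot] at this
        omega
      rw [Finset.sum_const, Finset.sum_const, Finset.sum_const, hc0, hc2, hc1]
    -- sum over code
    have hcode := sum_over_code (Δ L) (Δ M)ᶜ (Δ N) (fun c => (X : ℤ[X]) ^ (wtv c))
    rw [card_ker' L M N hP] at hcode
    have hKmatch : (univ.filter fun x : V m × V m × V m => codeMap (Δ L) (Δ M)ᶜ (Δ N) x = 0).card = K := by
      rw [card_ker' L M N hP, hKdef]
    have hcode2 : ∑ x : V m × V m × V m, (X : ℤ[X]) ^ (wtv (f x))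
        = K • ∑ c ∈ univ.filter (fun c => c ∈ LinearMap.range f),
            (X : ℤ[X]) ^ (wtv c) := by
      rw [hcode, Finset.smul_sum]
    -- integer coefficient identities
    have h1le : (1 : ℕ) ≤ 2 ^ (m - mm) := Nat.pow_pos (by norm_num)
    have hKT : (T : ℤ) = (K : ℤ) * 2 ^ (m + l + nn) := by
      have hTn : T = 2 ^ (m + (m + m)) := by
        rw [hTdef, Fintype.card_prod, Fintype.card_prod, card_V, ← pow_add, ← pow_add]
      calc (T : ℤ) = 2 ^ (m + (m + m)) := by rw [hTn]; push_cast; ring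
        _ = 2 ^ ((m - l) + ((m - nn) + (m + l + nn))) := by
            rw [show m + (m + m) = (m - l) + ((m - nn) + (m + l + nn)) from by omega]
        _ = (K : ℤ) * 2 ^ (m + l + nn) := by
            rw [hKdef]
            push_cast
            rw [pow_add, pow_add]
            ring
    have hK2Z : (K₂ : ℤ) = (K : ℤ) * (2 ^ (m - mm) - 1) := by
      rw [hK2def, hKdef, Nat.cast_mul, Nat.cast_mul, Nat.cast_sub h1le]
      push_cast
      ring
    have hKK2T : K + K₂ ≤ T := by
      have hq : (2 : ℤ) ^ (m - mm) ≤ 2 ^ (m + l + nn) := by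
        apply pow_le_pow_right₀ (by norm_num)
        omega
      have hKK2TZ : (K : ℤ) + (K₂ : ℤ) ≤ (T : ℤ) := by
        rw [hK2Z, hKT]
        calc (K : ℤ) + (K : ℤ) * (2 ^ (m - mm) - 1) = (K : ℤ) * 2 ^ (m - mm) := by ring
          _ ≤ (K : ℤ) * 2 ^ (m + l + nn) :=
              mul_le_mul_of_nonneg_left hq (by positivity)
      exact_mod_cast hKK2TZ
    have hK1Z : ((T - K - K₂ : ℕ) : ℤ) = (K : ℤ) * ((2 : ℤ) ^ (m + l + nn) - 2 ^ (m - mm)) := by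
      rw [Nat.cast_sub (by omega), Nat.cast_sub (by omega : K ≤ T)]
      rw [hKT, hK2Z]
      ring
    -- put it together and cancel K
    have hCK : (Polynomial.C ((K : ℤ)) : ℤ[X]) ≠ 0 := by
      rw [Ne, Polynomial.C_eq_zero]
      exact_mod_cast hKpos.ne'
    have hsmul : ∀ (k : ℕ) (p : ℤ[X]), k • p = Polynomial.C ((k : ℤ)) * p := by
      intro k p
      rw [nsmul_eq_mul, ← Polynomial.C_eq_natCast]
    apply mul_left_cancel₀ hCK
    calc Polynomial.C ((K : ℤ))
          * ∑ c ∈ univ.filter (fun c => c ∈ LinearMap.range f), (X : ℤ[X]) ^ wtv c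
        = K • ∑ c ∈ univ.filter (fun c => c ∈ LinearMap.range f), (X : ℤ[X]) ^ wtv c :=
          (hsmul _ _).symm
      _ = ∑ x : V m × V m × V m, (X : ℤ[X]) ^ (wtv (f x)) := hcode2.symm
      _ = K • 1 + (K₂ • X ^ (2 ^ (m + l + nn - 1)) + (T - K - K₂) • X ^ d₀) := hsum_triples
      _ = Polynomial.C ((K : ℤ))
            * (1 + Polynomial.C ((2 : ℤ) ^ (m + l + nn) - 2 ^ (m - mm)) * X ^ d₀
              + Polynomial.C ((2 : ℤ) ^ (m - mm) - 1) * X ^ (2 ^ (m + l + nn - 1))) := by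
          rw [hsmul K, hsmul K₂, hsmul (T - K - K₂), mul_one]
          rw [mul_add, mul_add, mul_one, ← mul_assoc, ← mul_assoc,
            ← Polynomial.C_mul, ← Polynomial.C_mul, ← hK1Z, ← hK2Z]
          ring
  · -- Griesmer
    obtain ⟨t, htdef⟩ : ∃ t, m = mm + t := ⟨m - mm, by omega⟩
    have ht1 : 1 ≤ t := by omega
    obtain ⟨a', ha'⟩ : ∃ a', l + nn + mm = a' + 1 := ⟨l + nn + mm - 1, by omega⟩
    have hQ : ((2 : ℚ) ^ m - 2 ^ mm) * 2 ^ (l + nn) / 2 = 2 ^ a' * (2 ^ t - 1) := by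
      have key : (2 : ℚ) ^ (l + nn) * 2 ^ mm = 2 ^ a' * 2 := by
        rw [← pow_add, show l + nn + mm = a' + 1 from ha', pow_succ]
      rw [div_eq_iff (by norm_num : (2 : ℚ) ≠ 0)]
      rw [show m = mm + t from htdef, pow_add]
      linear_combination ((2 : ℚ) ^ t - 1) * key
    have hexp : m + l + nn = a' + 1 + t := by omega
    rw [hexp]
    simp only [hQ]
    rw [griesmer_sum a' t ht1]
    have keyZ : (2 : ℤ) ^ (l + nn) * 2 ^ mm = 2 ^ a' * 2 := by
      rw [← pow_add, show l + nn + mm = a' + 1 from ha', pow_succ]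
    rw [show m = mm + t from htdef, pow_add]
    linear_combination (-((2 : ℤ) ^ t - 1)) * keyZ
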